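/- Let W be a finite-dimensional rational vector space with a positive definite inner product, S a finite subset of W, and C the convex hull of S. Then a point p lies in C if and only if for every point p' distinct from p there exists s in S with d(s,p) < d(s,p'). -/

import Mathlib

open RealInnerProductSpace


/-- Lemma `witnesses`: a point lies in the convex hull of a finite set `S` iff for
every other point `p'` there is `s ∈ S` strictly closer to `p` than to `p'`. -/
theorem stmt_0 {n : ℕ} (S : Finset (EuclideanSpace ℝ (Fin n)))
    (hS : S.Nonempty) (p : EuclideanSpace ℝ (Fin n)) :
    p ∈ convexHull ℝ (S : Set (EuclideanSpace ℝ (Fin n))) ↔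
      ∀ p' : EuclideanSpace ℝ (Fin n), p' ≠ p → ∃ s ∈ S, dist s p < dist s p' := by
  constructor
  · intro hp p' hne
    by_contra hcon
    push_neg at hcon
    -- every s ∈ S satisfies dist s p' ≤ dist s p, i.e. lies in a halfspace
    have hconv : Convex ℝ {x : EuclideanSpace ℝ (Fin n) |
        ⟪p - p', x⟫ ≤ (‖p‖^2 - ‖p'‖^2)/2} := by
      apply convex_halfSpace_le
      exact ⟨fun x y => inner_add_right _ _ _, fun c x => real_inner_smul_right _ _ _⟩
    have hsub : (S : Set (EuclideanSpace ℝ (Fin n))) ⊆ {x : EuclideanSpace ℝ (Fin n) |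
        ⟪p - p', x⟫ ≤ (‖p‖^2 - ‖p'‖^2)/2} := by
      intro s hs
      have h1 : dist s p' ≤ dist s p := hcon s hs
      have h2 : ‖s - p'‖^2 ≤ ‖s - p‖^2 := by
        rw [dist_eq_norm, dist_eq_norm] at h1
        exact pow_le_pow_left₀ (norm_nonneg _) h1 2
      rw [norm_sub_sq_real, norm_sub_sq_real] at h2
      simp only [Set.mem_setOf_eq, inner_sub_left]
      have e1 : ⟪p, s⟫ = ⟪s, p⟫ := real_inner_comm _ _
      have e2 : ⟪p', s⟫ = ⟪s, p'⟫ := real_inner_comm _ _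
      linarith
    have hps := convexHull_min hsub hconv hp
    simp only [Set.mem_setOf_eq, inner_sub_left] at hps
    have e1 : ⟪p, p⟫ = ‖p‖^2 := real_inner_self_eq_norm_sq p
    have e3 : ‖p - p'‖^2 = ‖p‖^2 - 2 * ⟪p, p'⟫ + ‖p'‖^2 := norm_sub_sq_real p p'
    have e2 : ⟪p', p⟫ = ⟪p, p'⟫ := real_inner_comm _ _
    have h0 : ‖p - p'‖^2 ≤ 0 := by linarith
    have : ‖p - p'‖ = 0 := le_antisymm (by nlinarith [norm_nonneg (p - p')]) (norm_nonneg _)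
    have : p - p' = 0 := by rwa [norm_eq_zero] at this
    exact hne (sub_eq_zero.mp this).symm
  · intro h
    by_contra hp
    have hclosed : IsClosed (convexHull ℝ (S : Set (EuclideanSpace ℝ (Fin n)))) :=
      (S.finite_toSet.isCompact_convexHull ℝ).isClosed
    obtain ⟨f, u, hfs, hfp⟩ := geometric_hahn_banach_closed_point (convex_convexHull ℝ _)
      hclosed hp
    set v := (InnerProductSpace.toDual ℝ (EuclideanSpace ℝ (Fin n))).symm f with hv
    have hvx : ∀ x, ⟪v, x⟫ = f x := fun x =>
      InnerProductSpace.toDual_symm_apply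
    obtain ⟨s0, hs0⟩ := hS
    have hs0' : f s0 < u := hfs s0 (subset_convexHull ℝ _ hs0)
    have hvne : v ≠ 0 := by
      intro h0
      have := hvx s0
      have h2 := hvx p
      rw [h0] at this h2
      simp at this h2
      linarith
    have hnv : (0:ℝ) < ‖v‖^2 := pow_pos (norm_pos_iff.mpr hvne) 2
    set t : ℝ := (f p - u)/‖v‖^2 with ht
    have htpos : 0 < t := div_pos (by linarith) hnv
    set p' : EuclideanSpace ℝ (Fin n) := p - t • v with hp'
    have hpne : p' ≠ p := by
      rw [hp']
      intro he
      rcases smul_eq_zero.mp (sub_eq_self.mp he) with h1 | h1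
      · exact absurd h1 (ne_of_gt htpos)
      · exact hvne h1
    obtain ⟨s, hs, hlt⟩ := h p' hpne
    -- show dist s p' < dist s p, contradiction
    have hfs' : f s < u := hfs s (subset_convexHull ℝ _ hs)
    have key : ‖s - p'‖^2 < ‖s - p‖^2 := by
      have e : s - p' = (s - p) + t • v := by rw [hp']; abel
      rw [e, norm_add_sq_real, inner_smul_right, norm_smul]
      have einner : ⟪s - p, v⟫ = f s - f p := by
        rw [real_inner_comm, hvx (s - p), map_sub]
      have htv : t * ‖v‖^2 = f p - u := by
        rw [ht]; field_simp
      rw [einner, Real.norm_eq_abs, abs_of_pos htpos]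
      nlinarith [htpos, hfs', hfp, htv]
    have : ‖s - p'‖ < ‖s - p‖ :=
      lt_of_pow_lt_pow_left₀ 2 (norm_nonneg _) key
    rw [dist_eq_norm, dist_eq_norm] at hlt
    linarith
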